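/- Let 1 ≤ k+1 < ℓ ≤ M with ℓ ∉ {1,…,k+1}. Then for every polynomial f ∈ F[z_1,…,z_M] that is symmetric in the variables z_1,…,z_{k+1}: [Ñ_{k+1}, z_ℓ] f = −β ( z_1 K_{12}K_{23}⋯K_{k,k+1}K_{k+1,ℓ} + z_2 K_{23}⋯K_{k,k+1}K_{k+1,ℓ} + ⋯ + z_k K_{k,k+1}K_{k+1,ℓ} + z_{k+1} K_{k+1,ℓ} ) Ñ_k f. -/

import Mathlib

open MvPolynomial Finset

section CSDefs

variable {F : Type*} [Field F] [CharZero F]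

/-- Exact division in a polynomial ring: `divExact d f = f / d` when `d ∣ f`, junk otherwise. -/
noncomputable def divExact {σ : Type*} (d f : MvPolynomial σ F) : MvPolynomial σ F := by
  classical exact if h : ∃ c, f = d * c then h.choose else 0

/-- The exchange operator `K_{ij}` permuting the variables `z_i` and `z_j`. -/
noncomputable def Kswap {N : ℕ} (i j : Fin N) (f : MvPolynomial (Fin N) F) :
    MvPolynomial (Fin N) F :=
  rename (Equiv.swap i j) f

/-- The Dunkl operator `∇_i = ∂_i + β ∑_{j ≠ i} (z_i - z_j)⁻¹ (1 - K_{ij})`. -/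
noncomputable def nabla {N : ℕ} (β : F) (i : Fin N) (f : MvPolynomial (Fin N) F) :
    MvPolynomial (Fin N) F :=
  pderiv i f + β • ∑ j ∈ Finset.univ.erase i, divExact (X i - X j) (f - Kswap i j f)

/-- `D_i = z_i ∇_i`. -/
noncomputable def Dop {N : ℕ} (β : F) (i : Fin N) (f : MvPolynomial (Fin N) F) :
    MvPolynomial (Fin N) F :=
  X i * nabla β i f

/-- `(D_{j₁} + kβ)(D_{j₂} + (k+1)β) ⋯` applied along a list of indices. -/
noncomputable def Dlist {N : ℕ} (β : F) :
    ℕ → List (Fin N) → MvPolynomial (Fin N) F → MvPolynomial (Fin N) F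
  | _, [], f => f
  | k, j :: rest, f => Dop β j (Dlist β (k + 1) rest f) + ((k : F) * β) • Dlist β (k + 1) rest f

/-- `D_{k,J} = (D_{j₁} + kβ)(D_{j₂} + (k+1)β) ⋯ (D_{j_ℓ} + (k+ℓ-1)β)` for
`J = {j₁ < j₂ < … < j_ℓ}`. -/
noncomputable def DJ {N : ℕ} (β : F) (k : ℕ) (J : Finset (Fin N))
    (f : MvPolynomial (Fin N) F) : MvPolynomial (Fin N) F :=
  Dlist β k (J.sort (· ≤ ·)) f

/-- `z_J = ∏_{i ∈ J} z_i`. -/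
noncomputable def zJ {N : ℕ} (J : Finset (Fin N)) : MvPolynomial (Fin N) F := ∏ i ∈ J, X i

/-- The creation operator `B⁺_{i,J} = ∑_{J' ⊆ J, |J'| = i} z_{J'} D_{1,J'}`. -/
noncomputable def Bplus {N : ℕ} (β : F) (i : ℕ) (J : Finset (Fin N))
    (f : MvPolynomial (Fin N) F) : MvPolynomial (Fin N) F :=
  ∑ J' ∈ J.powersetCard i, zJ J' * DJ β 1 J' f

/-- `A_{ij} = ((z_i+z_j)/(z_i-z_j))(z_i ∂_i - z_j ∂_j)`. -/
noncomputable def Aop {N : ℕ} (i j : Fin N) (f : MvPolynomial (Fin N) F) :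
    MvPolynomial (Fin N) F :=
  divExact (X i - X j) ((X i + X j) * (X i * pderiv i f - X j * pderiv j f))

/-- `H^{(S)} = ∑_{i ∈ S} (z_i ∂_i)² + β ∑_{i<j, i,j ∈ S} A_{ij}`. -/
noncomputable def Hop {N : ℕ} (β : F) (S : Finset (Fin N)) (f : MvPolynomial (Fin N) F) :
    MvPolynomial (Fin N) F :=
  ∑ i ∈ S, X i * pderiv i (X i * pderiv i f)
    + β • ∑ i ∈ S, ∑ j ∈ S.filter (fun j => i < j), Aop i j f

/-- A polynomial is symmetric in the variables indexed by `S`. -/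
def SymmOn {N : ℕ} (S : Finset (Fin N)) (f : MvPolynomial (Fin N) F) : Prop :=
  ∀ i ∈ S, ∀ j ∈ S, rename (Equiv.swap i j) f = f

/-- `phiCS β N lam i = (B⁺_i)^{λ_i - λ_{i+1}} ⋯ (B⁺_1)^{λ_1 - λ_2} · 1`,
where `lam` is 0-indexed: `lam (j-1) = λ_j`. -/
noncomputable def phiCS (β : F) (N : ℕ) (lam : ℕ → ℕ) : ℕ → MvPolynomial (Fin N) F
  | 0 => 1
  | i + 1 => (fun f => Bplus β (i + 1) Finset.univ f)^[lam i - lam (i + 1)] (phiCS β N lam i)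

/-- The monomial symmetric polynomial attached to an exponent vector. -/
noncomputable def msym (N : ℕ) (lam : Fin N → ℕ) : MvPolynomial (Fin N) F := by
  classical
  exact ∑ v ∈ (Finset.univ : Finset (Equiv.Perm (Fin N))).image
      (fun σ => fun i => lam (σ i)), ∏ i, X i ^ v i

/-- `𝐷̂_i = D_i + β(i-1) - β ∑_{j<i} (1 - K_{ij})` (0-indexed: `i-1` becomes `i`). -/
noncomputable def Dhat {N : ℕ} (β : F) (i : Fin N) (f : MvPolynomial (Fin N) F) :
    MvPolynomial (Fin N) F :=
  Dop β i f + (β * ((i : ℕ) : F)) • f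
    - β • ∑ j ∈ Finset.univ.filter (fun j => j < i), (f - Kswap i j f)

end CSDefs


set_option linter.unusedSectionVars false

section Proof1

open Finset

variable {F : Type*} [Field F] [CharZero F] {M : ℕ}

lemma divExact_eq {σ : Type*} {d f c : MvPolynomial σ F} (hd : d ≠ 0) (h : f = d * c) :
    divExact d f = c := by
  classical
  have he : ∃ c, f = d * c := ⟨c, h⟩
  have h0 : divExact d f = he.choose := by
    rw [divExact]
    exact dif_pos he
  rw [h0]
  have h2 := he.choose_spec
  exact mul_left_cancel₀ hd (by rw [← h2, ← h])

/-- Substitution `z_i := z_j`. -/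
noncomputable def psiup (i j : Fin M) : MvPolynomial (Fin M) F →ₐ[F] MvPolynomial (Fin M) F :=
  aeval (Function.update (X : Fin M → MvPolynomial (Fin M) F) i (X j))

lemma dvd_sub_psiup (i j : Fin M) (f : MvPolynomial (Fin M) F) :
    (X i - X j : MvPolynomial (Fin M) F) ∣ (f - psiup i j f) := by
  classical
  induction f using MvPolynomial.induction_on with
  | C a => simp [psiup]
  | add p q hp hq =>
      have h : p + q - psiup i j (p + q)
          = (p - psiup i j p) + (q - psiup i j q) := by
        rw [map_add]; ring
      rw [h]; exact dvd_add hp hq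
  | mul_X p t hp =>
      have hX : psiup i j (X t)
          = Function.update (X : Fin M → MvPolynomial (Fin M) F) i (X j) t := by
        rw [psiup, aeval_X]
      rw [map_mul, hX]
      rcases eq_or_ne t i with rfl | ht
      · rw [Function.update_self]
        have h : p * X t - psiup t j p * X j
            = (p - psiup t j p) * X t + psiup t j p * (X t - X j) := by ring
        rw [h]
        exact dvd_add (Dvd.dvd.mul_right hp _) (dvd_mul_left _ _)
      · rw [Function.update_of_ne ht]
        have h : p * X t - psiup i j p * X t
            = (p - psiup i j p) * X t := by ring
        rw [h]
        exact Dvd.dvd.mul_right hp _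

lemma psiup_kswap (i j : Fin M) (f : MvPolynomial (Fin M) F) :
    psiup i j (Kswap i j f) = psiup i j f := by
  classical
  rw [Kswap, psiup, aeval_rename]
  have hfun : (Function.update (X : Fin M → MvPolynomial (Fin M) F) i (X j)
      ∘ Equiv.swap i j) = Function.update (X : Fin M → MvPolynomial (Fin M) F) i (X j) := by
    funext t
    rcases eq_or_ne t i with rfl | hti
    · simp only [Function.comp_apply, Equiv.swap_apply_left]
      simp [Function.update_apply]
    · rcases eq_or_ne t j with rfl | htj
      · simp only [Function.comp_apply, Equiv.swap_apply_right]
        simp [Function.update_apply, hti]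
      · simp only [Function.comp_apply]
        rw [Equiv.swap_apply_of_ne_of_ne hti htj]
  rw [hfun]

lemma kswap_dvd (i j : Fin M) (f : MvPolynomial (Fin M) F) :
    (X i - X j : MvPolynomial (Fin M) F) ∣ (f - Kswap i j f) := by
  have h1 := dvd_sub_psiup i j f
  have h2 := dvd_sub_psiup i j (Kswap i j f)
  have h : f - Kswap i j f
      = (f - psiup i j f) - (Kswap i j f - psiup i j (Kswap i j f)) := by
    rw [psiup_kswap]; ring
  rw [h]
  exact dvd_sub h1 h2

/-- The divided-difference-type operator `(X i - X j)⁻¹ (1 - K_{ij})`. -/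
noncomputable def Del (i j : Fin M) (f : MvPolynomial (Fin M) F) : MvPolynomial (Fin M) F :=
  divExact (X i - X j) (f - Kswap i j f)

lemma X_sub_ne {i j : Fin M} (h : i ≠ j) : (X i - X j : MvPolynomial (Fin M) F) ≠ 0 := by
  intro hh
  exact h (MvPolynomial.X_injective (by rwa [sub_eq_zero] at hh))

lemma Del_spec {i j : Fin M} (h : i ≠ j) (f : MvPolynomial (Fin M) F) :
    f - Kswap i j f = (X i - X j) * Del i j f := by
  obtain ⟨c, hc⟩ := kswap_dvd (F := F) i j f
  rw [Del, divExact_eq (X_sub_ne h) hc]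
  exact hc

lemma Del_unique {i j : Fin M} (h : i ≠ j) {f c : MvPolynomial (Fin M) F}
    (hc : f - Kswap i j f = (X i - X j) * c) : Del i j f = c :=
  mul_left_cancel₀ (X_sub_ne h) (by rw [← Del_spec h, hc])

lemma Kswap_add (i j : Fin M) (f g : MvPolynomial (Fin M) F) :
    Kswap i j (f + g) = Kswap i j f + Kswap i j g := map_add _ _ _

lemma Kswap_smul (i j : Fin M) (c : F) (f : MvPolynomial (Fin M) F) :
    Kswap i j (c • f) = c • Kswap i j f := by
  rw [Kswap, Kswap]
  exact (rename (Equiv.swap i j)).toLinearMap.map_smul c f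

lemma Del_add {i j : Fin M} (h : i ≠ j) (f g : MvPolynomial (Fin M) F) :
    Del i j (f + g) = Del i j f + Del i j g := by
  apply Del_unique h
  rw [Kswap_add]
  have h1 := Del_spec h f
  have h2 := Del_spec h g
  linear_combination h1 + h2

lemma Del_smul {i j : Fin M} (h : i ≠ j) (c : F) (f : MvPolynomial (Fin M) F) :
    Del i j (c • f) = c • Del i j f := by
  apply Del_unique h
  rw [Kswap_smul, ← smul_sub, Del_spec h f, mul_smul_comm]

lemma Kswap_X_mul {i j l : Fin M} (hli : l ≠ i) (hlj : l ≠ j) (f : MvPolynomial (Fin M) F) :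
    Kswap i j (X l * f) = X l * Kswap i j f := by
  rw [Kswap, Kswap, map_mul, rename_X, Equiv.swap_apply_of_ne_of_ne hli hlj]

lemma Del_X_mul {i j l : Fin M} (hij : i ≠ j) (hli : l ≠ i) (hlj : l ≠ j)
    (f : MvPolynomial (Fin M) F) :
    Del i j (X l * f) = X l * Del i j f := by
  apply Del_unique hij
  rw [Kswap_X_mul hli hlj]
  have h1 := Del_spec hij f
  linear_combination (X l : MvPolynomial (Fin M) F) * h1

lemma Del_X_mul_eq {i l : Fin M} (hil : i ≠ l) (f : MvPolynomial (Fin M) F) :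
    Del i l (X l * f) = X l * Del i l f - Kswap i l f := by
  apply Del_unique hil
  have hK : Kswap i l (X l * f) = X i * Kswap i l f := by
    rw [Kswap, Kswap, map_mul, rename_X, Equiv.swap_apply_right]
  rw [hK]
  have h1 := Del_spec hil f
  linear_combination (X l : MvPolynomial (Fin M) F) * h1

end Proof1


section Proof2

open Finset

variable {F : Type*} [Field F] [CharZero F] {M : ℕ}

lemma rename_kswap (σ : Equiv.Perm (Fin M)) (i j : Fin M) (f : MvPolynomial (Fin M) F) :
    Kswap (σ i) (σ j) (rename (σ : Fin M → Fin M) f) = rename (σ : Fin M → Fin M) (Kswap i j f) := by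
  rw [Kswap, Kswap, rename_rename, rename_rename]
  have h := Equiv.swap_apply_apply σ i j
  have hcomp : (Equiv.swap (σ i) (σ j) : Fin M → Fin M) ∘ σ
      = (σ : Fin M → Fin M) ∘ Equiv.swap i j := by
    rw [h]
    funext t
    simp [Equiv.Perm.mul_apply]
  rw [hcomp]

lemma Del_rename {i j : Fin M} (hij : i ≠ j) (σ : Equiv.Perm (Fin M))
    (f : MvPolynomial (Fin M) F) :
    Del (σ i) (σ j) (rename (σ : Fin M → Fin M) f) = rename (σ : Fin M → Fin M) (Del i j f) := by
  apply Del_unique (fun h => hij (σ.injective h))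
  rw [rename_kswap σ i j f, ← map_sub, Del_spec hij f, map_mul, map_sub, rename_X, rename_X]

lemma nabla_def (β : F) (i : Fin M) (f : MvPolynomial (Fin M) F) :
    nabla β i f = pderiv i f + β • ∑ j ∈ Finset.univ.erase i, Del i j f := rfl

lemma nabla_add (β : F) (i : Fin M) (f g : MvPolynomial (Fin M) F) :
    nabla β i (f + g) = nabla β i f + nabla β i g := by
  rw [nabla_def, nabla_def, nabla_def, map_add]
  have hs : ∑ j ∈ Finset.univ.erase i, Del i j (f + g)
      = ∑ j ∈ Finset.univ.erase i, Del i j f + ∑ j ∈ Finset.univ.erase i, Del i j g := by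
    rw [← Finset.sum_add_distrib]
    apply Finset.sum_congr rfl
    intro j hj
    exact Del_add (Ne.symm (Finset.mem_erase.mp hj).1) f g
  rw [hs, smul_add]
  ring

lemma nabla_smul (β : F) (i : Fin M) (c : F) (f : MvPolynomial (Fin M) F) :
    nabla β i (c • f) = c • nabla β i f := by
  rw [nabla_def, nabla_def]
  have hd : pderiv i (c • f) = c • pderiv i f := Derivation.map_smul _ _ _
  rw [hd, smul_add]
  congr 1
  have hs : ∑ j ∈ Finset.univ.erase i, Del i j (c • f)
      = c • ∑ j ∈ Finset.univ.erase i, Del i j f := by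
    rw [Finset.smul_sum]
    apply Finset.sum_congr rfl
    intro j hj
    exact Del_smul (Ne.symm (Finset.mem_erase.mp hj).1) c f
  rw [hs, smul_comm]

lemma nabla_X_mul (β : F) {i l : Fin M} (hil : i ≠ l) (f : MvPolynomial (Fin M) F) :
    nabla β i (X l * f) = X l * nabla β i f - β • Kswap i l f := by
  classical
  have hl : l ∈ Finset.univ.erase i := Finset.mem_erase.mpr ⟨hil.symm, Finset.mem_univ l⟩
  rw [nabla_def, nabla_def]
  have hd : pderiv i (X l * f) = X l * pderiv i f := by
    rw [pderiv_mul, pderiv_X_of_ne (Ne.symm hil), zero_mul, zero_add]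
  rw [hd]
  have hsum : ∑ j ∈ Finset.univ.erase i, Del i j (X l * f)
      = X l * ∑ j ∈ Finset.univ.erase i, Del i j f - Kswap i l f := by
    rw [← Finset.add_sum_erase _ _ hl, ← Finset.add_sum_erase _ (fun j => Del i j f) hl]
    have h1 : Del i l (X l * f) = X l * Del i l f - Kswap i l f := Del_X_mul_eq hil f
    have h2 : ∑ j ∈ (Finset.univ.erase i).erase l, Del i j (X l * f)
        = ∑ j ∈ (Finset.univ.erase i).erase l, X l * Del i j f := by
      apply Finset.sum_congr rfl
      intro j hj
      have hj1 : j ≠ l := (Finset.mem_erase.mp hj).1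
      have hj2 : j ≠ i := (Finset.mem_erase.mp (Finset.mem_erase.mp hj).2).1
      exact Del_X_mul (Ne.symm hj2) (Ne.symm hil) (Ne.symm hj1) f
    rw [h1, h2, ← Finset.mul_sum]
    ring
  rw [hsum]
  rw [smul_sub, mul_add, mul_smul_comm]
  abel

lemma nabla_rename (β : F) (σ : Equiv.Perm (Fin M)) (i : Fin M) (f : MvPolynomial (Fin M) F) :
    nabla β (σ i) (rename (σ : Fin M → Fin M) f) = rename (σ : Fin M → Fin M) (nabla β i f) := by
  classical
  rw [nabla_def, nabla_def, map_add]
  congr 1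
  · exact pderiv_rename σ.injective i f
  · have hr : rename (σ : Fin M → Fin M) (β • ∑ j ∈ Finset.univ.erase i, Del i j f)
        = β • rename (σ : Fin M → Fin M) (∑ j ∈ Finset.univ.erase i, Del i j f) :=
      (rename (σ : Fin M → Fin M)).toLinearMap.map_smul _ _
    rw [hr]
    congr 1
    rw [map_sum]
    refine (Finset.sum_equiv σ ?_ ?_).symm
    · intro j
      simp only [Finset.mem_erase, Finset.mem_univ, and_true]
      exact ⟨fun h hc => h (σ.injective hc), fun h hc => h (by rw [hc])⟩
    · intro j hj
      have hij : i ≠ j := Ne.symm (Finset.mem_erase.mp hj).1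
      exact (Del_rename hij σ f).symm

lemma Dop_add (β : F) (i : Fin M) (f g : MvPolynomial (Fin M) F) :
    Dop β i (f + g) = Dop β i f + Dop β i g := by
  rw [Dop, Dop, Dop, nabla_add, mul_add]

lemma Dop_smul (β : F) (i : Fin M) (c : F) (f : MvPolynomial (Fin M) F) :
    Dop β i (c • f) = c • Dop β i f := by
  rw [Dop, Dop, nabla_smul, mul_smul_comm]

lemma Dop_X_mul (β : F) {i l : Fin M} (hil : i ≠ l) (f : MvPolynomial (Fin M) F) :
    Dop β i (X l * f) = X l * Dop β i f - β • (X i * Kswap i l f) := by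
  rw [Dop, Dop, nabla_X_mul β hil, mul_sub, mul_smul_comm]
  ring_nf

lemma Dop_rename (β : F) (σ : Equiv.Perm (Fin M)) (i : Fin M) (f : MvPolynomial (Fin M) F) :
    rename (σ : Fin M → Fin M) (Dop β i f) = Dop β (σ i) (rename (σ : Fin M → Fin M) f) := by
  rw [Dop, Dop, map_mul, rename_X, nabla_rename]

end Proof2


section Proof3

open Finset

variable {F : Type*} [Field F] [CharZero F] {M : ℕ}

lemma rename_smul (g : Fin M → Fin M) (c : F) (f : MvPolynomial (Fin M) F) :
    rename g (c • f) = c • rename g f := (rename g).toLinearMap.map_smul c f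

lemma Dlist_add (β : F) : ∀ (c : ℕ) (L : List (Fin M)) (f g : MvPolynomial (Fin M) F),
    Dlist β c L (f + g) = Dlist β c L f + Dlist β c L g
  | _, [], f, g => rfl
  | c, j :: rest, f, g => by
      rw [Dlist, Dlist, Dlist, Dlist_add β (c+1) rest f g, Dop_add, smul_add]
      ring

lemma Dlist_smul (β : F) : ∀ (c : ℕ) (L : List (Fin M)) (a : F) (f : MvPolynomial (Fin M) F),
    Dlist β c L (a • f) = a • Dlist β c L f
  | _, [], a, f => rfl
  | c, j :: rest, a, f => by
      rw [Dlist, Dlist, Dlist_smul β (c+1) rest a f, Dop_smul, smul_comm ((c:F) * β) a,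
        ← smul_add]

lemma Dlist_sub (β : F) (c : ℕ) (L : List (Fin M)) (f g : MvPolynomial (Fin M) F) :
    Dlist β c L (f - g) = Dlist β c L f - Dlist β c L g := by
  have h : f - g = f + (-1 : F) • g := by
    rw [neg_one_smul]; ring
  rw [h, Dlist_add, Dlist_smul, neg_one_smul]
  ring

lemma Dlist_append (β : F) : ∀ (c : ℕ) (L : List (Fin M)) (j : Fin M)
    (f : MvPolynomial (Fin M) F),
    Dlist β c (L ++ [j]) f
      = Dlist β c L (Dop β j f + (((c + L.length : ℕ) : F) * β) • f)
  | c, [], j, f => by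
      show Dlist β c [j] f = Dop β j f + (((c + 0 : ℕ) : F) * β) • f
      rw [Dlist, Dlist]
      norm_num
  | c, a :: rest, j, f => by
      show Dlist β c ((a :: rest) ++ [j]) f = _
      rw [List.cons_append, Dlist, Dlist_append β (c+1) rest j f, Dlist]
      have harith : ((c + 1 + rest.length : ℕ) : F) = ((c + (a :: rest).length : ℕ) : F) := by
        congr 1
        simp [List.length_cons]
        omega
      rw [harith]

lemma Dlist_rename (β : F) (σ : Equiv.Perm (Fin M)) :
    ∀ (c : ℕ) (L : List (Fin M)) (f : MvPolynomial (Fin M) F), (∀ j ∈ L, σ j = j) →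
    rename (σ : Fin M → Fin M) (Dlist β c L f) = Dlist β c L (rename (σ : Fin M → Fin M) f)
  | _, [], f, _ => rfl
  | c, j :: rest, f, h => by
      rw [Dlist, Dlist, map_add, rename_smul,
        Dop_rename β σ j _, h j List.mem_cons_self,
        Dlist_rename β σ (c+1) rest f (fun a ha => h a (List.mem_cons_of_mem j ha))]

/-- Strictly increasing lists with the same members are equal. -/
lemma list_pairwise_eq {L₁ L₂ : List (Fin M)} (h₁ : L₁.Pairwise (· < ·))
    (h₂ : L₂.Pairwise (· < ·)) (hm : ∀ x, x ∈ L₁ ↔ x ∈ L₂) : L₁ = L₂ := by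
  classical
  have n₁ : L₁.Nodup := h₁.imp (fun h => ne_of_lt h)
  have n₂ : L₂.Nodup := h₂.imp (fun h => ne_of_lt h)
  exact (fun hp h1 h2 => List.Perm.eq_of_pairwise' h1 h2 hp)
    (List.perm_of_nodup_nodup_toFinset_eq n₁ n₂ (by ext x; simp [hm x]))
    (h₁.imp (fun h => le_of_lt h)) (h₂.imp (fun h => le_of_lt h))

lemma eq_sort {s : Finset (Fin M)} {L : List (Fin M)} (hL : L.Pairwise (· < ·))
    (hm : ∀ x, x ∈ L ↔ x ∈ s) : s.sort (· ≤ ·) = L := by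
  classical
  refine (fun hp h1 h2 => List.Perm.eq_of_pairwise' h1 h2 hp)
    (List.perm_of_nodup_nodup_toFinset_eq (Finset.sort_nodup (s := s) (r := (· ≤ ·)))
      (hL.imp (fun h => ne_of_lt h)) ?_)
    (Finset.pairwise_sort (s := s) (r := (· ≤ ·))) (hL.imp (fun h => le_of_lt h))
  ext x
  simp [Finset.mem_sort, hm x]

/-- The list `[0, 1, …, k-1]` inside `Fin M`. -/
def myL (M k : ℕ) (h : k ≤ M) : List (Fin M) :=
  (List.range k).pmap (fun i hi => (⟨i, hi⟩ : Fin M))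
    (fun i hi => lt_of_lt_of_le (List.mem_range.mp hi) h)

lemma myL_mem {M k : ℕ} (h : k ≤ M) (x : Fin M) : x ∈ myL M k h ↔ (x : ℕ) < k := by
  rw [myL]
  simp only [List.mem_pmap, List.mem_range]
  constructor
  · rintro ⟨a, ha, rfl⟩; exact ha
  · intro hx; exact ⟨x, hx, rfl⟩

lemma myL_pairwise {M k : ℕ} (h : k ≤ M) : (myL M k h).Pairwise (· < ·) := by
  rw [myL]
  exact (List.pairwise_lt_range (n := k)).pmap _ (fun x hx y hy hxy => by
    simpa [Fin.lt_def] using hxy)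

lemma myL_length {M k : ℕ} (h : k ≤ M) : (myL M k h).length = k := by
  rw [myL, List.length_pmap, List.length_range]

lemma myL_succ {M k : ℕ} (h : k + 1 ≤ M) :
    myL M (k + 1) h = myL M k (le_of_lt h) ++ [⟨k, h⟩] := by
  refine list_pairwise_eq (myL_pairwise h) ?_ ?_
  · rw [List.pairwise_append]
    refine ⟨myL_pairwise _, List.pairwise_singleton _ _, ?_⟩
    intro a ha b hb
    rw [myL_mem] at ha
    rw [List.mem_singleton] at hb
    subst hb
    exact Fin.mk_lt_mk.mpr ha |>.trans_le (le_refl _)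
  · intro x
    rw [myL_mem, List.mem_append, myL_mem, List.mem_singleton]
    constructor
    · intro hx
      rcases Nat.lt_succ_iff_lt_or_eq.mp hx with h1 | h1
      · exact Or.inl h1
      · exact Or.inr (Fin.ext h1)
    · rintro (h1 | rfl)
      · exact Nat.lt_succ_of_lt h1
      · exact Nat.lt_succ_self k

lemma DJ_eq_myL (β : F) (c k : ℕ) (h : k ≤ M) (f : MvPolynomial (Fin M) F) :
    DJ β c (Finset.univ.filter (fun x : Fin M => (x : ℕ) < k)) f
      = Dlist β c (myL M k h) f := by
  rw [DJ]
  congr 1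
  refine eq_sort (myL_pairwise h) ?_
  intro x
  rw [myL_mem]
  simp

end Proof3

/-- The string of exchange operators `z_m K_{m,m+1} K_{m+1,m+2} ⋯ K_{k-1,k} K_{k,l}`
(0-indexed) without the leading variable: `chainOp k kF l m g
  = K_{m,m+1} ⋯ K_{k-1,k} K_{k,l} g`, where `kF` is the index `k` as an element of
`Fin M`. -/
noncomputable def chainOp {F : Type*} [Field F] {M : ℕ} [NeZero M] (k : ℕ) (kF l : Fin M)
    (m : ℕ) (g : MvPolynomial (Fin M) F) : MvPolynomial (Fin M) F :=
  ((List.finRange M).filter (fun (j : Fin M) => m ≤ (j : ℕ) ∧ (j : ℕ) + 1 ≤ k)).foldr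
    (fun j acc => rename (Equiv.swap j (j + 1)) acc)
    (rename (Equiv.swap kF l) g)


section Proof4

open Finset
open Fin.NatCast

/-- Strictly increasing lists with the same members are equal (general version). -/
lemma list_pairwise_eq' {α : Type*} [LinearOrder α] {L₁ L₂ : List α}
    (h₁ : L₁.Pairwise (· < ·)) (h₂ : L₂.Pairwise (· < ·)) (hm : ∀ x, x ∈ L₁ ↔ x ∈ L₂) :
    L₁ = L₂ := by
  classical
  have n₁ : L₁.Nodup := h₁.imp (fun h => ne_of_lt h)
  have n₂ : L₂.Nodup := h₂.imp (fun h => ne_of_lt h)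
  exact (fun hp h1 h2 => List.Perm.eq_of_pairwise' h1 h2 hp)
    (List.perm_of_nodup_nodup_toFinset_eq n₁ n₂ (by ext x; simp [hm x]))
    (h₁.imp (fun h => le_of_lt h)) (h₂.imp (fun h => le_of_lt h))

/-- The underlying index list of `chainOp`. -/
def cList (M m k : ℕ) [NeZero M] : List (Fin M) :=
  ((List.range M).filter (fun j => decide (m ≤ j ∧ j + 1 ≤ k))).map
    (fun a => ((a : ℕ) : Fin M))

variable {F : Type*} [Field F] [CharZero F] {M : ℕ} [NeZero M]

lemma chainOp_eq (k : ℕ) (kF l : Fin M) (m : ℕ) (g : MvPolynomial (Fin M) F) :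
    chainOp k kF l m g
      = (cList M m k).foldr (fun j acc => rename (Equiv.swap j (j + 1)) acc)
          (rename (Equiv.swap kF l) g) := by
  rw [chainOp, cList]
  congr 1
  rw [← List.map_coe_finRange_eq_range, List.filter_map, List.map_map]
  simp [Function.comp_def]

lemma cList_nil {m k : ℕ} (hk : k ≤ m) : cList M m k = [] := by
  rw [cList]
  have h : ((List.range M).filter (fun j => decide (m ≤ j ∧ j + 1 ≤ k))) = [] := by
    rw [List.filter_eq_nil_iff]
    intro a _
    simp only [decide_eq_true_eq, not_and]
    omega
  rw [h, List.map_nil]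

lemma chainOp_of_le {k m : ℕ} (hk : k ≤ m) (kF l : Fin M) (g : MvPolynomial (Fin M) F) :
    chainOp k kF l m g = rename (Equiv.swap kF l : Fin M → Fin M) g := by
  rw [chainOp_eq, cList_nil hk, List.foldr_nil]

lemma cList_succ {m k : ℕ} (hmk : m ≤ k) (h : k + 1 < M) :
    cList M m (k + 1) = cList M m k ++ [((k : ℕ) : Fin M)] := by
  rw [cList, cList]
  have hnat : ((List.range M).filter (fun j => decide (m ≤ j ∧ j + 1 ≤ k + 1)))
      = ((List.range M).filter (fun j => decide (m ≤ j ∧ j + 1 ≤ k))) ++ [k] := by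
    refine list_pairwise_eq' (List.Pairwise.filter _ (List.pairwise_lt_range (n := M))) ?_ ?_
    · rw [List.pairwise_append]
      refine ⟨List.Pairwise.filter _ (List.pairwise_lt_range (n := M)),
        List.pairwise_singleton _ _, ?_⟩
      intro a ha b hb
      rw [List.mem_filter] at ha
      rw [List.mem_singleton] at hb
      subst hb
      have := ha.2
      simp only [decide_eq_true_eq] at this
      omega
    · intro x
      simp only [List.mem_append, List.mem_filter, List.mem_range, List.mem_singleton,
        decide_eq_true_eq]
      omega
  rw [hnat, List.map_append, List.map_cons, List.map_nil]

lemma natCast_fin_mk {k : ℕ} (h : k < M) : ((k : ℕ) : Fin M) = ⟨k, h⟩ := by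
  apply Fin.ext
  rw [Fin.val_cast_of_lt h]

lemma natCast_fin_add_one {k : ℕ} (h : k + 1 < M) :
    ((k : ℕ) : Fin M) + 1 = ⟨k + 1, h⟩ := by
  have h1 : ((k : ℕ) : Fin M) + 1 = (((k + 1 : ℕ)) : Fin M) := by push_cast; ring
  rw [h1, natCast_fin_mk h]

lemma chainOp_succ {m k : ℕ} (hmk : m ≤ k) (h : k + 1 < M) (l : Fin M)
    (g : MvPolynomial (Fin M) F) :
    chainOp (k + 1) ⟨k + 1, h⟩ l m g
      = chainOp k ⟨k, by omega⟩ ⟨k + 1, h⟩ m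
          (rename (Equiv.swap (⟨k + 1, h⟩ : Fin M) l : Fin M → Fin M) g) := by
  rw [chainOp_eq, chainOp_eq, cList_succ hmk h, List.foldr_append, List.foldr_cons,
    List.foldr_nil, natCast_fin_add_one h, natCast_fin_mk (by omega : k < M)]

lemma rename_swap_shuffle {a b c : Fin M} (hab : a ≠ b) (hbc : b ≠ c) (hac : a ≠ c)
    (g : MvPolynomial (Fin M) F) :
    rename (Equiv.swap a b : Fin M → Fin M) (rename (Equiv.swap b c : Fin M → Fin M) g)
      = rename (Equiv.swap a c : Fin M → Fin M) (rename (Equiv.swap a b : Fin M → Fin M) g) := by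
  rw [rename_rename, rename_rename]
  have hcomp : ((Equiv.swap a b : Fin M → Fin M) ∘ (Equiv.swap b c : Fin M → Fin M))
      = ((Equiv.swap a c : Fin M → Fin M) ∘ (Equiv.swap a b : Fin M → Fin M)) := by
    funext t
    simp only [Function.comp_apply, Equiv.swap_apply_def]
    split_ifs <;> simp_all
  rw [hcomp]

lemma chainOp_skip {m k : ℕ} (hmk : m ≤ k) (h : k + 1 < M) {l : Fin M}
    (hl : k + 1 < (l : ℕ)) (g : MvPolynomial (Fin M) F) :
    chainOp (k + 1) ⟨k + 1, h⟩ l m g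
      = chainOp k ⟨k, by omega⟩ l m
          (rename (Equiv.swap (⟨k, by omega⟩ : Fin M) (⟨k + 1, h⟩ : Fin M) : Fin M → Fin M) g) := by
  rw [chainOp_succ hmk h l g, chainOp_eq, chainOp_eq]
  congr 1
  exact rename_swap_shuffle (a := (⟨k, by omega⟩ : Fin M)) (b := (⟨k + 1, h⟩ : Fin M)) (c := l)
    (Fin.ne_of_val_ne (by simp only [Fin.val_mk]; omega))
    (Fin.ne_of_val_ne (by simp only [Fin.val_mk]; omega))
    (Fin.ne_of_val_ne (by simp only [Fin.val_mk]; omega)) g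

lemma chainOp_add (k : ℕ) (kF l : Fin M) (m : ℕ) (g g' : MvPolynomial (Fin M) F) :
    chainOp k kF l m (g + g') = chainOp k kF l m g + chainOp k kF l m g' := by
  rw [chainOp_eq, chainOp_eq, chainOp_eq, map_add]
  generalize (rename (Equiv.swap kF l : Fin M → Fin M)) g = u
  generalize (rename (Equiv.swap kF l : Fin M → Fin M)) g' = v
  induction (cList M m k) with
  | nil => rfl
  | cons a L ih => rw [List.foldr_cons, List.foldr_cons, List.foldr_cons, ih, map_add]

lemma chainOp_smul (k : ℕ) (kF l : Fin M) (m : ℕ) (a : F) (g : MvPolynomial (Fin M) F) :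
    chainOp k kF l m (a • g) = a • chainOp k kF l m g := by
  rw [chainOp_eq, chainOp_eq, rename_smul]
  generalize (rename (Equiv.swap kF l : Fin M → Fin M)) g = u
  induction (cList M m k) with
  | nil => rfl
  | cons b L ih => rw [List.foldr_cons, List.foldr_cons, ih, rename_smul]

lemma chainOp_sub (k : ℕ) (kF l : Fin M) (m : ℕ) (g g' : MvPolynomial (Fin M) F) :
    chainOp k kF l m (g - g') = chainOp k kF l m g - chainOp k kF l m g' := by
  have h : g - g' = g + (-1 : F) • g' := by rw [neg_one_smul]; ring
  rw [h, chainOp_add, chainOp_smul, neg_one_smul]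
  ring

end Proof4


section Proof5

open Finset

variable {F : Type*} [Field F] [CharZero F] {M : ℕ} [NeZero M]

lemma key (β : F) : ∀ (k : ℕ) (hkM : k + 1 ≤ M) (l : Fin M), k < (l : ℕ) →
    ∀ f : MvPolynomial (Fin M) F,
    SymmOn (Finset.univ.filter (fun x : Fin M => (x : ℕ) < k + 1)) f →
    Dlist β 0 (myL M (k + 1) hkM) (X l * f) - X l * Dlist β 0 (myL M (k + 1) hkM) f
      = -(β • ∑ m ∈ Finset.univ.filter (fun x : Fin M => (x : ℕ) < k + 1),
          X m * chainOp k ⟨k, hkM⟩ l ((m : ℕ))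
            (Dlist β 0 (myL M k (Nat.le_of_succ_le hkM)) f)) := by
  intro k
  induction k with
  | zero =>
    intro hkM l hkl f _hf
    have h0l : (⟨0, hkM⟩ : Fin M) ≠ l := Fin.ne_of_val_ne (by simp only [Fin.val_mk]; omega)
    have hD : ∀ h : MvPolynomial (Fin M) F,
        Dlist β 0 (myL M (0 + 1) hkM) h = Dop β ⟨0, hkM⟩ h := by
      intro h
      rw [myL_succ hkM, Dlist_append]
      simp only [myL_length, Nat.zero_add, Nat.cast_zero, zero_mul, zero_smul, add_zero]
      rfl
    rw [hD, hD]
    have hset : Finset.univ.filter (fun x : Fin M => (x : ℕ) < 0 + 1) = {⟨0, hkM⟩} := by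
      ext x
      simp only [Finset.mem_filter, Finset.mem_univ, true_and, Finset.mem_singleton,
        Fin.ext_iff, Fin.val_mk]
      omega
    rw [hset, Finset.sum_singleton]
    have hchain : chainOp 0 ⟨0, hkM⟩ l ((⟨0, hkM⟩ : Fin M) : ℕ)
        (Dlist β 0 (myL M 0 (Nat.le_of_succ_le hkM)) f)
        = Kswap ⟨0, hkM⟩ l f := by
      have h1 : Dlist β 0 (myL M 0 (Nat.le_of_succ_le hkM)) f = f := rfl
      rw [h1, chainOp_of_le (by simp only [Fin.val_mk]; omega : (0:ℕ) ≤ ((⟨0, hkM⟩ : Fin M) : ℕ))]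
      rfl
    rw [hchain, Dop_X_mul β h0l f]
    module
  | succ k IH =>
    intro hkM l hkl f hf
    have hk1M : k + 1 ≤ M := Nat.le_of_succ_le hkM
    have hkM' : k ≤ M := Nat.le_of_succ_le hk1M
    have hkk1l : (⟨k + 1, hkM⟩ : Fin M) ≠ l :=
      Fin.ne_of_val_ne (by simp only [Fin.val_mk]; omega)
    have hsym : ∀ i j : Fin M, (i : ℕ) < k + 2 → (j : ℕ) < k + 2 →
        rename (Equiv.swap i j) f = f := by
      intro i j hi hj
      exact hf i (Finset.mem_filter.mpr ⟨Finset.mem_univ i, hi⟩)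
        j (Finset.mem_filter.mpr ⟨Finset.mem_univ j, hj⟩)
    -- the polynomial g = (D_{k+1} + (k+1)β) f
    set g : MvPolynomial (Fin M) F :=
      Dop β ⟨k + 1, hkM⟩ f + (((k + 1 : ℕ) : F) * β) • f with hg
    set Kf : MvPolynomial (Fin M) F := Kswap ⟨k + 1, hkM⟩ l f with hKf
    -- expansion of the (k+2)-level Dlist
    have hexp : ∀ h : MvPolynomial (Fin M) F,
        Dlist β 0 (myL M (k + 1 + 1) hkM) h
          = Dlist β 0 (myL M (k + 1) hk1M)
              (Dop β ⟨k + 1, hkM⟩ h + (((k + 1 : ℕ) : F) * β) • h) := by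
      intro h
      rw [myL_succ hkM, Dlist_append]
      simp only [myL_length, Nat.zero_add]
    -- expansion of the (k+1)-level Dlist
    have hexp1 : ∀ h : MvPolynomial (Fin M) F,
        Dlist β 0 (myL M (k + 1) hk1M) h
          = Dlist β 0 (myL M k hkM')
              (Dop β ⟨k, hk1M⟩ h + (((k : ℕ) : F) * β) • h) := by
      intro h
      rw [myL_succ hk1M, Dlist_append]
      simp only [myL_length, Nat.zero_add]
    -- E2
    have E2 : Dlist β 0 (myL M (k + 1 + 1) hkM) f = Dlist β 0 (myL M (k + 1) hk1M) g := by
      rw [hexp f]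
    -- E1
    have E1 : Dlist β 0 (myL M (k + 1 + 1) hkM) (X l * f)
        = Dlist β 0 (myL M (k + 1) hk1M) (X l * g)
          - β • Dlist β 0 (myL M (k + 1) hk1M) (X ⟨k + 1, hkM⟩ * Kf) := by
      rw [hexp (X l * f)]
      have harg : Dop β ⟨k + 1, hkM⟩ (X l * f) + (((k + 1 : ℕ) : F) * β) • (X l * f)
          = X l * g - β • (X ⟨k + 1, hkM⟩ * Kf) := by
        rw [Dop_X_mul β hkk1l f, hg, mul_add, mul_smul_comm]
        module
      rw [harg, Dlist_sub, Dlist_smul]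
    -- symmetry of g on {0,…,k}
    have hgsym : SymmOn (Finset.univ.filter (fun x : Fin M => (x : ℕ) < k + 1)) g := by
      intro i hi j hj
      rw [Finset.mem_filter] at hi hj
      have hik : (i : ℕ) < k + 1 := hi.2
      have hjk : (j : ℕ) < k + 1 := hj.2
      have hik1 : i ≠ ⟨k + 1, hkM⟩ := Fin.ne_of_val_ne (by simp only [Fin.val_mk]; omega)
      have hjk1 : j ≠ ⟨k + 1, hkM⟩ := Fin.ne_of_val_ne (by simp only [Fin.val_mk]; omega)
      rw [hg, map_add, rename_smul, Dop_rename β (Equiv.swap i j) ⟨k + 1, hkM⟩ f,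
        Equiv.swap_apply_of_ne_of_ne (Ne.symm hik1) (Ne.symm hjk1),
        hsym i j (by omega) (by omega)]
    -- symmetry of Kf on {0,…,k}
    have hKfsym : SymmOn (Finset.univ.filter (fun x : Fin M => (x : ℕ) < k + 1)) Kf := by
      intro i hi j hj
      rw [Finset.mem_filter] at hi hj
      have hik : (i : ℕ) < k + 1 := hi.2
      have hjk : (j : ℕ) < k + 1 := hj.2
      have hik1 : i ≠ ⟨k + 1, hkM⟩ := Fin.ne_of_val_ne (by simp only [Fin.val_mk]; omega)
      have hjk1 : j ≠ ⟨k + 1, hkM⟩ := Fin.ne_of_val_ne (by simp only [Fin.val_mk]; omega)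
      have hil : i ≠ l := Fin.ne_of_val_ne (by omega)
      have hjl : j ≠ l := Fin.ne_of_val_ne (by omega)
      have hh := rename_kswap (Equiv.swap i j) ⟨k + 1, hkM⟩ l f
      rw [Equiv.swap_apply_of_ne_of_ne (Ne.symm hik1) (Ne.symm hjk1),
        Equiv.swap_apply_of_ne_of_ne (Ne.symm hil) (Ne.symm hjl),
        hsym i j (by omega) (by omega)] at hh
      rw [hKf, ← hh]
    -- E3 : IH applied to (l, g)
    have E3 := IH hk1M l (by omega) g hgsym
    -- E4 : IH applied to (⟨k+1⟩, Kf)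
    have E4 := IH hk1M ⟨k + 1, hkM⟩ (by simp only [Fin.val_mk]; omega) Kf hKfsym
    -- the swap of k and k+1 fixes myL M k
    have hfix : ∀ j ∈ myL M k hkM',
        (Equiv.swap (⟨k, hk1M⟩ : Fin M) (⟨k + 1, hkM⟩ : Fin M)) j = j := by
      intro j hj
      rw [myL_mem] at hj
      exact Equiv.swap_apply_of_ne_of_ne
        (Fin.ne_of_val_ne (by simp only [Fin.val_mk]; omega))
        (Fin.ne_of_val_ne (by simp only [Fin.val_mk]; omega))
    have hfixl : ∀ j ∈ myL M k hkM',
        (Equiv.swap (⟨k + 1, hkM⟩ : Fin M) l) j = j := by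
      intro j hj
      rw [myL_mem] at hj
      exact Equiv.swap_apply_of_ne_of_ne
        (Fin.ne_of_val_ne (by simp only [Fin.val_mk]; omega))
        (Fin.ne_of_val_ne (by omega))
    have hfixl1 : ∀ j ∈ myL M (k + 1) hk1M,
        (Equiv.swap (⟨k + 1, hkM⟩ : Fin M) l) j = j := by
      intro j hj
      rw [myL_mem] at hj
      exact Equiv.swap_apply_of_ne_of_ne
        (Fin.ne_of_val_ne (by simp only [Fin.val_mk]; omega))
        (Fin.ne_of_val_ne (by omega))
    -- H81 : the conjugated (k+1)-level Dlist
    have H81 : rename (Equiv.swap (⟨k, hk1M⟩ : Fin M) (⟨k + 1, hkM⟩ : Fin M)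
          : Fin M → Fin M) (Dlist β 0 (myL M (k + 1) hk1M) f)
        = Dlist β 0 (myL M k hkM') g - β • Dlist β 0 (myL M k hkM') f := by
      rw [hexp1 f, Dlist_rename β _ 0 (myL M k hkM') _ hfix, map_add, rename_smul,
        Dop_rename β (Equiv.swap ⟨k, hk1M⟩ ⟨k + 1, hkM⟩) ⟨k, hk1M⟩ f,
        Equiv.swap_apply_left, hsym ⟨k, hk1M⟩ ⟨k + 1, hkM⟩ (by simp only [Fin.val_mk]; omega)
          (by simp only [Fin.val_mk]; omega)]
      have hgf : Dop β ⟨k + 1, hkM⟩ f + (((k : ℕ) : F) * β) • f = g - β • f := by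
        rw [hg]
        push_cast
        module
      rw [hgf, Dlist_sub, Dlist_smul]
    -- H8 : per-term identity for m ≤ k
    have H8 : ∀ m : Fin M, (m : ℕ) ≤ k →
        chainOp (k + 1) ⟨k + 1, hkM⟩ l ((m : ℕ)) (Dlist β 0 (myL M (k + 1) hk1M) f)
          = chainOp k ⟨k, hk1M⟩ l ((m : ℕ)) (Dlist β 0 (myL M k hkM') g)
            - β • chainOp k ⟨k, hk1M⟩ l ((m : ℕ)) (Dlist β 0 (myL M k hkM') f) := by
      intro m hm
      rw [chainOp_skip hm hkM hkl, H81, chainOp_sub, chainOp_smul]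
    -- H9 : per-term identity for the S2 = S3 comparison
    have H9 : ∀ m : Fin M, (m : ℕ) ≤ k →
        chainOp k ⟨k, hk1M⟩ ⟨k + 1, hkM⟩ ((m : ℕ)) (Dlist β 0 (myL M k hkM') Kf)
          = chainOp k ⟨k, hk1M⟩ l ((m : ℕ)) (Dlist β 0 (myL M k hkM') f) := by
      intro m hm
      have h1 : Dlist β 0 (myL M k hkM') Kf
          = rename (Equiv.swap (⟨k + 1, hkM⟩ : Fin M) l : Fin M → Fin M)
              (Dlist β 0 (myL M k hkM') f) := by
        rw [Dlist_rename β _ 0 (myL M k hkM') _ hfixl, hKf, Kswap]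
      rw [h1, ← chainOp_succ hm hkM l, chainOp_skip hm hkM hkl,
        Dlist_rename β _ 0 (myL M k hkM') _ hfix,
        hsym ⟨k, hk1M⟩ ⟨k + 1, hkM⟩ (by simp only [Fin.val_mk]; omega)
          (by simp only [Fin.val_mk]; omega)]
    -- splitting the sum
    have hins : Finset.univ.filter (fun x : Fin M => (x : ℕ) < k + 1 + 1)
        = insert (⟨k + 1, hkM⟩ : Fin M)
            (Finset.univ.filter (fun x : Fin M => (x : ℕ) < k + 1)) := by
      ext x
      simp only [Finset.mem_filter, Finset.mem_univ, true_and, Finset.mem_insert,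
        Fin.ext_iff, Fin.val_mk]
      omega
    have hnotin : (⟨k + 1, hkM⟩ : Fin M) ∉
        Finset.univ.filter (fun x : Fin M => (x : ℕ) < k + 1) := by
      simp only [Finset.mem_filter, Finset.mem_univ, true_and, Fin.val_mk]
      omega
    -- E7 : the m = k+1 term
    have E7 : chainOp (k + 1) ⟨k + 1, hkM⟩ l (((⟨k + 1, hkM⟩ : Fin M) : ℕ))
        (Dlist β 0 (myL M (k + 1) hk1M) f)
        = Dlist β 0 (myL M (k + 1) hk1M) Kf := by
      rw [chainOp_of_le (le_refl (k + 1) : k + 1 ≤ ((⟨k + 1, hkM⟩ : Fin M) : ℕ)),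
        Dlist_rename β _ 0 (myL M (k + 1) hk1M) _ hfixl1, hKf, Kswap]
    -- E6 : the full sum
    have E6 : ∑ m ∈ Finset.univ.filter (fun x : Fin M => (x : ℕ) < k + 1 + 1),
          X m * chainOp (k + 1) ⟨k + 1, hkM⟩ l ((m : ℕ))
            (Dlist β 0 (myL M (k + 1) hk1M) f)
        = X ⟨k + 1, hkM⟩ * Dlist β 0 (myL M (k + 1) hk1M) Kf
          + (∑ m ∈ Finset.univ.filter (fun x : Fin M => (x : ℕ) < k + 1),
              X m * chainOp k ⟨k, hk1M⟩ l ((m : ℕ)) (Dlist β 0 (myL M k hkM') g)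
            - β • ∑ m ∈ Finset.univ.filter (fun x : Fin M => (x : ℕ) < k + 1),
              X m * chainOp k ⟨k, hk1M⟩ l ((m : ℕ)) (Dlist β 0 (myL M k hkM') f)) := by
      rw [hins, Finset.sum_insert hnotin, E7]
      congr 1
      rw [Finset.smul_sum, ← Finset.sum_sub_distrib]
      apply Finset.sum_congr rfl
      intro m hm
      rw [Finset.mem_filter] at hm
      rw [H8 m (by omega), mul_sub, mul_smul_comm]
    -- E5 : S2 = S3
    have E5 : ∑ m ∈ Finset.univ.filter (fun x : Fin M => (x : ℕ) < k + 1),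
          X m * chainOp k ⟨k, hk1M⟩ ⟨k + 1, hkM⟩ ((m : ℕ)) (Dlist β 0 (myL M k hkM') Kf)
        = ∑ m ∈ Finset.univ.filter (fun x : Fin M => (x : ℕ) < k + 1),
          X m * chainOp k ⟨k, hk1M⟩ l ((m : ℕ)) (Dlist β 0 (myL M k hkM') f) := by
      apply Finset.sum_congr rfl
      intro m hm
      rw [Finset.mem_filter] at hm
      rw [H9 m (by omega)]
    -- final assembly
    rw [E1, E2, E6]
    rw [E5] at E4
    -- now pure linear algebra
    have E3' := E3
    have E4' := E4
    simp only [smul_eq_C_mul] at E3' E4' ⊢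
    linear_combination E3' - (C β : MvPolynomial (Fin M) F) * E4'

end Proof5

/-- for `f` symmetric in `z_1,…,z_{k+1}` and `ℓ ∉ {1,…,k+1}` (0-indexed:
`l` with `k < l`):
`[Ñ_{k+1}, z_ℓ] f = -β (z_1 K_{12}⋯K_{k,k+1}K_{k+1,ℓ} + ⋯ + z_{k+1} K_{k+1,ℓ}) Ñ_k f`. -/
theorem statement_11 {F : Type*} [Field F] [CharZero F] {M : ℕ} (β : F) (k : ℕ)
    (l : Fin M) (hkl : k < (l : ℕ)) (f : MvPolynomial (Fin M) F)
    (hf : SymmOn (Finset.univ.filter (fun x : Fin M => (x : ℕ) < k + 1)) f) :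
    letI : NeZero M := ⟨(Fin.pos l).ne'⟩
    DJ β 0 (Finset.univ.filter (fun x : Fin M => (x : ℕ) < k + 1)) (X l * f)
      - X l * DJ β 0 (Finset.univ.filter (fun x : Fin M => (x : ℕ) < k + 1)) f
    = -(β • ∑ m ∈ Finset.univ.filter (fun x : Fin M => (x : ℕ) < k + 1),
        X m * chainOp k (⟨k, lt_trans hkl l.isLt⟩ : Fin M) l (m : ℕ)
          (DJ β 0 (Finset.univ.filter (fun x : Fin M => (x : ℕ) < k)) f)) := by
  have hM : NeZero M := ⟨(Fin.pos l).ne'⟩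
  have hkM : k + 1 ≤ M := by have := l.isLt; omega
  rw [DJ_eq_myL β 0 (k + 1) hkM (X l * f), DJ_eq_myL β 0 (k + 1) hkM f,
    DJ_eq_myL β 0 k (Nat.le_of_succ_le hkM) f]
  exact key β k hkM l hkl f hf
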